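/- Suppose f_σ ∈ 𝔨 and h_σ ∈ 𝔥 are unit vectors with AA* f_σ = σ² f_σ and A*A h_σ = σ² h_σ, and additionally A h_σ = σ f_σ. Then ⟨h_σ, (∏_{k=1}^n W_k) h_σ⟩ = Π_n(σ²) and ⟨f_σ, R_𝔨(φ_{n+1}) U (∏_{k=1}^n W_k) h_σ⟩ = σ Θ_n(σ²). -/

import Mathlib

open ContinuousLinearMap Complex Submodule Polynomial

lemma stmt9_pow_eigen {E : Type*} [NormedAddCommGroup E] [NormedSpace ℂ E]
    (T : E →L[ℂ] E) (c : ℂ) (v : E) (hv : T v = c • v) (k : ℕ) :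
    (T ^ k) v = c ^ k • v := by
  induction k with
  | zero => simp
  | succ k ih =>
      rw [pow_succ, ContinuousLinearMap.mul_apply, hv, map_smul, ih, smul_smul, pow_succ,
        mul_comm]

lemma stmt9_aeval_eigen {E : Type*} [NormedAddCommGroup E] [NormedSpace ℂ E]
    (T : E →L[ℂ] E) (c : ℂ) (v : E) (hv : T v = c • v) (p : Polynomial ℂ) :
    Polynomial.aeval T p v = p.eval c • v := by
  induction p using Polynomial.induction_on' with
  | add p q hp hq => simp [hp, hq, add_smul]
  | monomial k a =>
      simp only [Polynomial.aeval_monomial, ContinuousLinearMap.mul_apply,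
        Polynomial.eval_monomial]
      rw [stmt9_pow_eigen T c v hv k]
      simp [Algebra.algebraMap_eq_smul_one, smul_smul, mul_comm]

set_option maxHeartbeats 1000000 in
open ContinuousLinearMap Complex Submodule Polynomial in
theorem stmt9
    {H : Type*} [NormedAddCommGroup H] [InnerProductSpace ℂ H] [CompleteSpace H]
    (𝔥 𝔨 : Submodule ℂ H) [CompleteSpace 𝔥] [CompleteSpace 𝔨]
    (U : H →L[ℂ] H) (hU1 : adjoint U ∘L U = 1) (hU2 : U ∘L adjoint U = 1)
    (A : 𝔥 →L[ℂ] 𝔨) (B : 𝔥ᗮ →L[ℂ] 𝔨) (C : 𝔥 →L[ℂ] 𝔨ᗮ) (D : 𝔥ᗮ →L[ℂ] 𝔨ᗮ)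
    (hA : ∀ x : 𝔥, A x = orthogonalProjection 𝔨 (U x))
    (hB : ∀ y : 𝔥ᗮ, B y = orthogonalProjection 𝔨 (U y))
    (hC : ∀ x : 𝔥, C x = orthogonalProjection 𝔨ᗮ (U x))
    (hD : ∀ y : 𝔥ᗮ, D y = orthogonalProjection 𝔨ᗮ (U y))
    (θ φ : ℕ → ℝ) (W Wn : ℕ → (H →L[ℂ] H))
    (hWdef : ∀ k, W k = (Complex.exp (θ k * Complex.I) • (𝔥.subtypeL ∘L orthogonalProjection 𝔥) +
          Complex.exp (-θ k * Complex.I) • (1 - 𝔥.subtypeL ∘L orthogonalProjection 𝔥)) ∘L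
        (adjoint U ∘L
          ((Complex.exp (φ k * Complex.I) • (𝔨.subtypeL ∘L orthogonalProjection 𝔨) +
            Complex.exp (-φ k * Complex.I) • (1 - 𝔨.subtypeL ∘L orthogonalProjection 𝔨)) ∘L U)))
    (hWn0 : Wn 0 = 1) (hWnS : ∀ n, Wn (n + 1) = W (n + 1) ∘L Wn n)
    (Pi' Φ' : ℕ → Polynomial ℂ) (n : ℕ)
    (hblock : ∀ x : 𝔥, ∀ y : 𝔥ᗮ,
      Wn n ((x : H) + (y : H)) =
        ((Polynomial.aeval (adjoint A ∘L A) (Pi' n) x +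
          (Complex.I • (Polynomial.aeval (adjoint A ∘L A) (Φ' n) ∘L (adjoint A ∘L B))) y : 𝔥) : H) +
        (((Complex.I • (Polynomial.aeval (adjoint D ∘L D) ((Φ' n).map (starRingEnd ℂ)) ∘L
            (adjoint B ∘L A))) x +
          Polynomial.aeval (adjoint D ∘L D) ((Pi' n).map (starRingEnd ℂ)) y : 𝔥ᗮ) : H))
    (Θ : Polynomial ℂ)
    (hΘ : Θ = Polynomial.C (Complex.exp (φ (n + 1) * Complex.I)) *
      (Pi' n + Polynomial.C Complex.I * ((Φ' n).map (starRingEnd ℂ)) * (1 - Polynomial.X)))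
    (σ : ℝ) (fσ : 𝔨) (hσ : 𝔥) -- hσ : eigenvector in 𝔥
    (hfnorm : ‖fσ‖ = 1) (hhnorm : ‖hσ‖ = 1)
    (hf : A (adjoint A fσ) = ((σ : ℂ) ^ 2) • fσ)
    (hh : adjoint A (A hσ) = ((σ : ℂ) ^ 2) • hσ)
    (hAh : A hσ = (σ : ℂ) • fσ) :
    inner ℂ (hσ : H) (Wn n (hσ : H)) = (Pi' n).eval ((σ : ℂ) ^ 2) ∧
    inner ℂ (fσ : H)
      (((Complex.exp (φ (n + 1) * Complex.I) • (𝔨.subtypeL ∘L orthogonalProjection 𝔨) +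
        Complex.exp (-φ (n + 1) * Complex.I) • (1 - 𝔨.subtypeL ∘L orthogonalProjection 𝔨)) ∘L
        (U ∘L Wn n)) (hσ : H)) = (σ : ℂ) * Θ.eval ((σ : ℂ) ^ 2) := by
  -- adjoint formulas
  have adjA : ∀ g : 𝔨, adjoint A g = orthogonalProjection 𝔥 (adjoint U (g : H)) := by
    intro g
    apply ext_inner_left ℂ
    intro x
    rw [ContinuousLinearMap.adjoint_inner_right, hA,
      inner_orthogonalProjection_eq_of_mem_right, inner_orthogonalProjection_eq_of_mem_left,
      ContinuousLinearMap.adjoint_inner_right]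
  have adjB : ∀ g : 𝔨, adjoint B g = orthogonalProjection 𝔥ᗮ (adjoint U (g : H)) := by
    intro g
    apply ext_inner_left ℂ
    intro x
    rw [ContinuousLinearMap.adjoint_inner_right, hB,
      inner_orthogonalProjection_eq_of_mem_right, inner_orthogonalProjection_eq_of_mem_left,
      ContinuousLinearMap.adjoint_inner_right]
  have adjD : ∀ g : 𝔨ᗮ, adjoint D g = orthogonalProjection 𝔥ᗮ (adjoint U (g : H)) := by
    intro g
    apply ext_inner_left ℂ
    intro x
    rw [ContinuousLinearMap.adjoint_inner_right, hD,
      inner_orthogonalProjection_eq_of_mem_right, inner_orthogonalProjection_eq_of_mem_left,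
      ContinuousLinearMap.adjoint_inner_right]
  -- A A* + B B* = 1 on 𝔨, applied to fσ
  have hABstar : ((A (adjoint A fσ) : H)) + ((B (adjoint B fσ) : H)) = (fσ : H) := by
    rw [hA, hB, adjA, adjB, ← Submodule.coe_add, ← map_add, ← map_add,
      (show (orthogonalProjection 𝔥 (adjoint U (fσ : H)) : H) + (orthogonalProjection 𝔥ᗮ (adjoint U (fσ : H)) : H) = adjoint U (fσ : H) from 𝔥.starProjection_add_starProjection_orthogonal _)]
    have h2 : U (adjoint U (fσ : H)) = (fσ : H) := by
      rw [← ContinuousLinearMap.comp_apply, hU2]; rfl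
    rw [h2, orthogonalProjection_mem_subspace_eq_self]
  -- B* B + D* D = 1 on 𝔥ᗮ
  have hBD : ∀ y : 𝔥ᗮ, adjoint B (B y) + adjoint D (D y) = y := by
    intro y
    rw [adjB, adjD, hB, hD, ← map_add, ← map_add,
      (show (orthogonalProjection 𝔨 (U (y : H)) : H) + (orthogonalProjection 𝔨ᗮ (U (y : H)) : H) = U (y : H) from 𝔨.starProjection_add_starProjection_orthogonal _)]
    have h2 : adjoint U (U (y : H)) = (y : H) := by
      rw [← ContinuousLinearMap.comp_apply, hU1]; rfl
    rw [h2, orthogonalProjection_mem_subspace_eq_self]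
  obtain ⟨b, hb⟩ : ∃ b : 𝔥ᗮ, adjoint B fσ = b := ⟨_, rfl⟩
  obtain ⟨s, hs⟩ : ∃ s : ℂ, (σ : ℂ) ^ 2 = s := ⟨_, rfl⟩
  rw [hs] at hf hh
  have hBb : B b = (1 - s) • fσ := by
    apply Subtype.coe_injective
    have h := hABstar
    rw [hf, hb] at h
    push_cast at h ⊢
    rw [sub_smul, one_smul]
    exact eq_sub_of_add_eq' h
  have hDDb : (adjoint D ∘L D) b = s • b := by
    have h1 := hBD b
    rw [hBb, map_smul, hb] at h1
    rw [ContinuousLinearMap.comp_apply, eq_sub_of_add_eq' h1]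
    module
  have hAAh : (adjoint A ∘L A) hσ = s • hσ := by
    rw [ContinuousLinearMap.comp_apply, hh]
  -- block formula at hσ
  have hW : Wn n (hσ : H) =
      ((Polynomial.aeval (adjoint A ∘L A) (Pi' n) hσ : H)) +
      (((Complex.I • (Polynomial.aeval (adjoint D ∘L D) ((Φ' n).map (starRingEnd ℂ)) ∘L
          (adjoint B ∘L A))) hσ : H)) := by
    have h := hblock hσ 0
    simpa using h
  have hveval : Polynomial.aeval (adjoint A ∘L A) (Pi' n) hσ = (Pi' n).eval s • hσ :=
    stmt9_aeval_eigen _ s hσ hAAh _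
  obtain ⟨q, hq⟩ : ∃ q : Polynomial ℂ, (Φ' n).map (starRingEnd ℂ) = q := ⟨_, rfl⟩
  have hvperp : (Complex.I • (Polynomial.aeval (adjoint D ∘L D) q ∘L
      (adjoint B ∘L A))) hσ = (Complex.I * (σ : ℂ) * q.eval s) • b := by
    rw [ContinuousLinearMap.smul_apply, ContinuousLinearMap.comp_apply,
      ContinuousLinearMap.comp_apply, hAh, map_smul, hb, map_smul,
      stmt9_aeval_eigen _ s b hDDb q]
    rw [smul_smul, smul_smul, mul_assoc]
  have hinner_hh : (inner ℂ (hσ : H) (hσ : H) : ℂ) = 1 := by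
    rw [inner_self_eq_norm_sq_to_K]
    rw [show ‖(hσ : H)‖ = ‖hσ‖ from rfl, hhnorm]; norm_num
  have hinner_ff : (inner ℂ (fσ : H) (fσ : H) : ℂ) = 1 := by
    rw [inner_self_eq_norm_sq_to_K]
    rw [show ‖(fσ : H)‖ = ‖fσ‖ from rfl, hfnorm]; norm_num
  rw [hq] at hW
  have hPk : ∀ w : H, (inner ℂ (fσ : H) w : ℂ) = inner ℂ (fσ : H) ((orthogonalProjection 𝔨 w : H)) := by
    intro w
    have h1 : (inner ℂ (fσ : H) (w - (orthogonalProjection 𝔨 w : H)) : ℂ) = 0 :=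
      Submodule.inner_right_of_mem_orthogonal (Submodule.coe_mem fσ)
        (sub_starProjection_mem_orthogonal (K := 𝔨) w)
    rw [inner_sub_right, sub_eq_zero] at h1
    exact h1
  constructor
  · rw [hW, inner_add_right]
    have hz : (inner ℂ (hσ : H)
        (((Complex.I • (Polynomial.aeval (adjoint D ∘L D) q ∘L (adjoint B ∘L A))) hσ : H)) : ℂ) = 0 :=
      Submodule.inner_right_of_mem_orthogonal (Submodule.coe_mem hσ) (Subtype.coe_prop _)
    rw [hz, add_zero, hveval, hs, Submodule.coe_smul, inner_smul_right, hinner_hh, mul_one]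
  · -- second part
    rw [ContinuousLinearMap.comp_apply, ContinuousLinearMap.comp_apply, hW]
    set z : H := U (((Polynomial.aeval (adjoint A ∘L A) (Pi' n) hσ : H)) +
      (((Complex.I • (Polynomial.aeval (adjoint D ∘L D) q ∘L (adjoint B ∘L A))) hσ : H))) with hzdef
    have hRz : (inner ℂ (fσ : H)
        ((Complex.exp (φ (n + 1) * Complex.I) • (𝔨.subtypeL ∘L orthogonalProjection 𝔨) +
          Complex.exp (-φ (n + 1) * Complex.I) • (1 - 𝔨.subtypeL ∘L orthogonalProjection 𝔨)) z) : ℂ)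
        = Complex.exp (φ (n + 1) * Complex.I) * inner ℂ (fσ : H) z := by
      rw [ContinuousLinearMap.add_apply, ContinuousLinearMap.smul_apply,
        ContinuousLinearMap.smul_apply, inner_add_right, inner_smul_right, inner_smul_right]
      have h1 : (inner ℂ (fσ : H) (((1 : H →L[ℂ] H) - 𝔨.subtypeL ∘L orthogonalProjection 𝔨) z) : ℂ) = 0 := by
        have he : ((1 : H →L[ℂ] H) - 𝔨.subtypeL ∘L orthogonalProjection 𝔨) z
            = z - ((orthogonalProjection 𝔨 z : 𝔨) : H) := rfl
        rw [he]
        exact Submodule.inner_right_of_mem_orthogonal (Submodule.coe_mem fσ)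
          (sub_starProjection_mem_orthogonal (K := 𝔨) z)
      have h2 : (inner ℂ (fσ : H) ((𝔨.subtypeL ∘L orthogonalProjection 𝔨) z) : ℂ)
          = inner ℂ (fσ : H) z := by
        have he : ((𝔨.subtypeL ∘L orthogonalProjection 𝔨) z)
            = ((orthogonalProjection 𝔨 z : 𝔨) : H) := rfl
        rw [he, ← hPk]
      rw [h1, h2, mul_zero, add_zero]
    have t1 : (inner ℂ (fσ : H)
        (U ((Polynomial.aeval (adjoint A ∘L A) (Pi' n) hσ : H))) : ℂ)
        = (Pi' n).eval s * (σ : ℂ) := by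
      rw [hPk, ← hA, hveval, map_smul, hAh]
      rw [Submodule.coe_smul, Submodule.coe_smul, inner_smul_right, inner_smul_right,
        hinner_ff, mul_one]
    have t2 : (inner ℂ (fσ : H)
        (U (((Complex.I • (Polynomial.aeval (adjoint D ∘L D) q ∘L (adjoint B ∘L A))) hσ : H))) : ℂ)
        = Complex.I * (σ : ℂ) * q.eval s * (1 - s) := by
      rw [hPk, ← hB, hvperp, map_smul, hBb]
      rw [Submodule.coe_smul, Submodule.coe_smul, inner_smul_right, inner_smul_right,
        hinner_ff, mul_one]
    have hz1 : (inner ℂ (fσ : H) z : ℂ)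
        = (Pi' n).eval s * (σ : ℂ) + Complex.I * (σ : ℂ) * q.eval s * (1 - s) := by
      rw [hzdef, map_add, inner_add_right, t1, t2]
    rw [hRz, hz1, hΘ, hs, hq]
    simp only [Polynomial.eval_mul, Polynomial.eval_C, Polynomial.eval_add,
      Polynomial.eval_one, Polynomial.eval_X, Polynomial.eval_sub]
    ring
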